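/- For any sample (X_1,...,X_n) of partitions, F_n(M) = f_n(𝔛) whenever 𝔛 = (X̂_1,...,X̂_n) is a global minimizer of f_n(𝔛') = (1/n)∑_i ‖X̂'_i − M_{𝔛'}‖² and M = π(M_𝔛); that is, the minimal value of the alignment variance equals the Fréchet function value at the induced partition. -/

import Mathlib

open Finset

noncomputable section

def LP (l m : ℕ) : Set (Matrix (Fin l) (Fin m) ℝ) :=
  {X | (∀ k j, X k j ∈ Set.Icc (0:ℝ) 1) ∧ ∀ j, ∑ k, X k j = 1}

def act {l m : ℕ} (σ : Equiv.Perm (Fin l)) (X : Matrix (Fin l) (Fin m) ℝ) :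
    Matrix (Fin l) (Fin m) ℝ :=
  fun k j => X (σ⁻¹ k) j

def orbit {l m : ℕ} (X : Matrix (Fin l) (Fin m) ℝ) : Set (Matrix (Fin l) (Fin m) ℝ) :=
  {Y | ∃ σ : Equiv.Perm (Fin l), act σ X = Y}

def finner {l m : ℕ} (A B : Matrix (Fin l) (Fin m) ℝ) : ℝ :=
  ∑ k, ∑ j, A k j * B k j

def fnorm {l m : ℕ} (A : Matrix (Fin l) (Fin m) ℝ) : ℝ :=
  Real.sqrt (finner A A)

def pdist {l m : ℕ} (A B : Set (Matrix (Fin l) (Fin m) ℝ)) : ℝ :=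
  sInf {d | ∃ X ∈ A, ∃ Y ∈ B, d = fnorm (X - Y)}

lemma fnorm_nonneg {l m : ℕ} (A : Matrix (Fin l) (Fin m) ℝ) : 0 ≤ fnorm A :=
  Real.sqrt_nonneg _

lemma fnorm_sq {l m : ℕ} (A : Matrix (Fin l) (Fin m) ℝ) :
    fnorm A ^ 2 = ∑ k, ∑ j, (A k j) ^ 2 := by
  unfold fnorm finner
  rw [Real.sq_sqrt]
  · simp [sq]
  · apply Finset.sum_nonneg; intro k _; apply Finset.sum_nonneg; intro j _
    exact mul_self_nonneg _

lemma act_sub {l m : ℕ} (τ : Equiv.Perm (Fin l)) (U V : Matrix (Fin l) (Fin m) ℝ) :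
    act τ (U - V) = act τ U - act τ V := by
  funext k j; simp [act, Matrix.sub_apply]

lemma act_act {l m : ℕ} (σ τ : Equiv.Perm (Fin l)) (Xm : Matrix (Fin l) (Fin m) ℝ) :
    act σ (act τ Xm) = act (σ * τ) Xm := by
  funext k j; simp [act]

lemma fnorm_act {l m : ℕ} (τ : Equiv.Perm (Fin l)) (W : Matrix (Fin l) (Fin m) ℝ) :
    fnorm (act τ W) = fnorm W := by
  unfold fnorm finner act
  congr 1
  exact Equiv.sum_comp τ⁻¹ (fun k => ∑ j, W k j * W k j)

lemma act_one {l m : ℕ} (W : Matrix (Fin l) (Fin m) ℝ) : act (1 : Equiv.Perm (Fin l)) W = W := by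
  funext k j; simp [act]

lemma var_min (n : ℕ) (hn : 0 < n) (x : Fin n → ℝ) (c : ℝ) :
    ∑ i, (x i - (n:ℝ)⁻¹ * ∑ j, x j) ^ 2 ≤ ∑ i, (x i - c) ^ 2 := by
  set μ : ℝ := (n:ℝ)⁻¹ * ∑ j, x j with hμdef
  have hnn : (n:ℝ) ≠ 0 := Nat.cast_ne_zero.mpr hn.ne'
  have hsum : ∑ i, (x i - μ) = 0 := by
    rw [Finset.sum_sub_distrib, Finset.sum_const, card_univ, Fintype.card_fin, nsmul_eq_mul, hμdef]
    field_simp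
    ring
  have key : ∑ i, (x i - c) ^ 2
      = ∑ i, (x i - μ) ^ 2 + 2 * (μ - c) * ∑ i, (x i - μ) + (n : ℝ) * (μ - c) ^ 2 := by
    have h : ∀ i : Fin n, (x i - c) ^ 2 = (x i - μ) ^ 2 + 2 * (μ - c) * (x i - μ) + (μ - c) ^ 2 := by
      intro i; ring
    simp_rw [h]
    rw [Finset.sum_add_distrib, Finset.sum_add_distrib, ← Finset.mul_sum, Finset.sum_const,
      card_univ, Fintype.card_fin, nsmul_eq_mul]
  rw [key, hsum]
  nlinarith [sq_nonneg (μ - c)]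

lemma matrix_var {l m n : ℕ} (hn : 0 < n) (B : Fin n → Matrix (Fin l) (Fin m) ℝ)
    (C : Matrix (Fin l) (Fin m) ℝ) :
    ∑ i, fnorm (B i - (n:ℝ)⁻¹ • ∑ j, B j) ^ 2 ≤ ∑ i, fnorm (B i - C) ^ 2 := by
  have swap : ∀ (f : Fin n → Fin l → Fin m → ℝ),
      ∑ i, ∑ k, ∑ j, f i k j = ∑ k, ∑ j, ∑ i, f i k j := by
    intro f
    rw [Finset.sum_comm]
    refine Finset.sum_congr rfl fun k _ => ?_
    rw [Finset.sum_comm]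
  simp only [fnorm_sq, Matrix.sub_apply, Matrix.smul_apply, Matrix.sum_apply, smul_eq_mul]
  rw [swap, swap]
  refine Finset.sum_le_sum fun k _ => Finset.sum_le_sum fun j _ => ?_
  exact var_min n hn (fun i => B i k j) (C k j)

theorem frechet_value_eq_min_alignment_variance (l m n : ℕ) (hn : 0 < n)
    (X : Fin n → Matrix (Fin l) (Fin m) ℝ) (hX : ∀ i, X i ∈ LP l m)
    (A : Fin n → Matrix (Fin l) (Fin m) ℝ) (hA : ∀ i, A i ∈ orbit (X i))
    (hmin : ∀ B : Fin n → Matrix (Fin l) (Fin m) ℝ, (∀ i, B i ∈ orbit (X i)) →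
      (n : ℝ)⁻¹ * ∑ i, (fnorm (A i - (n : ℝ)⁻¹ • ∑ j, A j)) ^ 2 ≤
      (n : ℝ)⁻¹ * ∑ i, (fnorm (B i - (n : ℝ)⁻¹ • ∑ j, B j)) ^ 2) :
    (n : ℝ)⁻¹ * ∑ i, (pdist (orbit (X i)) (orbit ((n : ℝ)⁻¹ • ∑ j, A j))) ^ 2 =
    (n : ℝ)⁻¹ * ∑ i, (fnorm (A i - (n : ℝ)⁻¹ • ∑ j, A j)) ^ 2 := by
  set M : Matrix (Fin l) (Fin m) ℝ := (n:ℝ)⁻¹ • ∑ j, A j with hMdef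
  have hM_self : M ∈ orbit M := ⟨1, by funext k j; simp [act]⟩
  have hninv : (0:ℝ) < (n:ℝ)⁻¹ := by positivity
  have key : ∀ i, pdist (orbit (X i)) (orbit M) ^ 2 = fnorm (A i - M) ^ 2 := by
    intro i
    set S : Set ℝ := {d | ∃ Y ∈ orbit (X i), ∃ Z ∈ orbit M, d = fnorm (Y - Z)} with hSdef
    have hmem : fnorm (A i - M) ∈ S := ⟨A i, hA i, M, hM_self, rfl⟩
    have hS_range : S = Set.range
        (fun p : Equiv.Perm (Fin l) × Equiv.Perm (Fin l) =>
          fnorm (act p.1 (X i) - act p.2 M)) := by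
      ext d
      constructor
      · rintro ⟨Y, ⟨σ, rfl⟩, Z, ⟨τ, rfl⟩, rfl⟩
        exact ⟨(σ, τ), rfl⟩
      · rintro ⟨⟨σ, τ⟩, rfl⟩
        exact ⟨_, ⟨σ, rfl⟩, _, ⟨τ, rfl⟩, rfl⟩
    have hfin : S.Finite := hS_range ▸ Set.finite_range _
    have hne : S.Nonempty := ⟨_, hmem⟩
    have hpd_nonneg : 0 ≤ sInf S := by
      apply le_csInf hne
      rintro d ⟨Y, _, Z, _, rfl⟩
      exact fnorm_nonneg _
    have hle : sInf S ≤ fnorm (A i - M) := csInf_le hfin.bddBelow hmem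
    have hpd_mem : sInf S ∈ S := hne.csInf_mem hfin
    rw [hS_range] at hpd_mem
    obtain ⟨⟨σ, τ⟩, hp⟩ := hpd_mem
    set v : Matrix (Fin l) (Fin m) ℝ := act (τ⁻¹ * σ) (X i) with hvdef
    have hpv : sInf S = fnorm (v - M) := by
      rw [hS_range, ← hp]
      show fnorm (act σ (X i) - act τ M) = fnorm (v - M)
      calc fnorm (act σ (X i) - act τ M)
          = fnorm (act τ⁻¹ (act σ (X i) - act τ M)) := (fnorm_act _ _).symm
        _ = fnorm (v - M) := by
            rw [act_sub, act_act, act_act, inv_mul_cancel, act_one]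
    set B : Fin n → Matrix (Fin l) (Fin m) ℝ := Function.update A i v with hBdef
    have hB : ∀ i', B i' ∈ orbit (X i') := by
      intro i'
      by_cases h : i' = i
      · subst h; simp only [hBdef, Function.update_self]; exact ⟨τ⁻¹ * σ, rfl⟩
      · simp only [hBdef, Function.update_of_ne h]; exact hA i'
    have h1 := hmin B hB
    have h2 : (n:ℝ)⁻¹ * ∑ i', fnorm (B i' - (n:ℝ)⁻¹ • ∑ j, B j) ^ 2 ≤
        (n:ℝ)⁻¹ * ∑ i', fnorm (B i' - M) ^ 2 :=
      mul_le_mul_of_nonneg_left (matrix_var hn B M) hninv.le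
    have h3 : ∑ i', fnorm (A i' - M) ^ 2 ≤ ∑ i', fnorm (B i' - M) ^ 2 :=
      le_of_mul_le_mul_left (h1.trans h2) hninv
    have hcomp : (fun i' => fnorm (B i' - M) ^ 2) =
        Function.update (fun i' => fnorm (A i' - M) ^ 2) i (fnorm (v - M) ^ 2) := by
      funext i'
      by_cases h : i' = i
      · subst h; simp [hBdef]
      · simp [hBdef, Function.update_of_ne h]
    rw [hcomp, Finset.sum_update_of_mem (Finset.mem_univ i),
      ← Finset.add_sum_erase Finset.univ (fun i' => fnorm (A i' - M) ^ 2) (Finset.mem_univ i)]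
      at h3
    rw [Finset.sdiff_singleton_eq_erase] at h3
    have h4 : fnorm (A i - M) ^ 2 ≤ fnorm (v - M) ^ 2 := by linarith
    have h5 : sInf S ^ 2 ≤ fnorm (A i - M) ^ 2 := pow_le_pow_left₀ hpd_nonneg hle 2
    have h5' : fnorm (v - M) ^ 2 ≤ fnorm (A i - M) ^ 2 := hpv ▸ h5
    show sInf S ^ 2 = fnorm (A i - M) ^ 2
    rw [hpv]
    linarith
  rw [hMdef] at key ⊢
  congr 1
  exact Finset.sum_congr rfl fun i _ => key i
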